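/- arXiv:0909.4673 — 2 statements merged into one kernel-verified Lean document; each statement's English description precedes it below -/
import Mathlib

section
/- Measuring a dependently corrected qubit is equivalent to a dependent measurement: for all α ∈ ℝ and s,t ∈ {0,1}, the projector identity ⟨±_α| ∘ X^s Z^t = e^{iφ} ⟨±_{(−1)^s α + tπ}| holds for some phase φ depending only on α, s, t, ± (i.e. the vectors (X^s Z^t)†|±_α⟩ and |±_{(−1)^s α + tπ}⟩ are equal up to a unit complex scalar). -/
open Matrix

/-- `|±_α⟩ = (1/√2)(|0⟩ ± e^{iα}|1⟩)`; `ε = false` is `+`, `ε = true` is `−`. -/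
noncomputable def ketPM (ε : Bool) (α : ℝ) : Fin 2 → ℂ :=
  ![1 / Real.sqrt 2,
    (if ε then -1 else 1) * Complex.exp ((α : ℂ) * Complex.I) / Real.sqrt 2]

def PauliX : Matrix (Fin 2) (Fin 2) ℂ := !![0, 1; 1, 0]
def PauliZ : Matrix (Fin 2) (Fin 2) ℂ := !![1, 0; 0, -1]

def Xpow (s : Bool) : Matrix (Fin 2) (Fin 2) ℂ := if s then PauliX else 1
def Zpow (t : Bool) : Matrix (Fin 2) (Fin 2) ℂ := if t then PauliZ else 1

lemma norm_exp_I (α : ℝ) : ‖Complex.exp ((α : ℂ) * Complex.I)‖ = 1 := by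
  rw [Complex.norm_exp]
  simp

/-- Measuring a dependently corrected qubit is a dependent measurement:
`(Xˢ Zᵗ)† |±_α⟩` equals `|±_{(−1)ˢ α + tπ}⟩` up to a unit phase. -/
theorem dependent_measurement (α : ℝ) (s t ε : Bool) :
    ∃ φ : ℂ, ‖φ‖ = 1 ∧
      (Xpow s * Zpow t)ᴴ.mulVec (ketPM ε α) =
        φ • ketPM ε ((if s then -α else α) + (if t then Real.pi else 0)) := by
  refine ⟨if s then (if ε then -1 else 1) * Complex.exp ((α : ℂ) * Complex.I) else 1, ?_, ?_⟩
  · rcases s with _ | _ <;> rcases ε with _ | _ <;>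
      simp [norm_exp_I]
  · have hne : Complex.exp ((α : ℂ) * Complex.I) ≠ 0 := Complex.exp_ne_zero _
    have hs : (Real.sqrt 2 : ℂ) ≠ 0 := by
      norm_cast
      positivity
    funext i
    rcases s with _ | _ <;> rcases t with _ | _ <;> rcases ε with _ | _ <;>
      fin_cases i <;>
      · simp [Xpow, Zpow, PauliX, PauliZ, ketPM, Matrix.mulVec, dotProduct,
          Fin.sum_univ_two, Matrix.mul_apply, Matrix.conjTranspose_apply, Matrix.one_apply,
          add_mul, neg_mul, Complex.exp_add, Complex.exp_neg, Complex.exp_pi_mul_I] <;>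
      (try field_simp)
end

section
/- For the dependency-based depth of command sequences: depth(t₁ ⊗ t₂) = max(depth t₁, depth t₂) when t₁ and t₂ act on disjoint qubit sets, and depth(t₂ ∘ t₁) ≤ depth t₁ + depth t₂, where depth of a sequence A is the maximal length of a subsequence (p_1,…,p_k) of A with dom(p_x) ∩ dom(p_{x+1}) ≠ ∅ for all x. -/
/-- The dependency depth of a command sequence (each command represented by its domain):
the greatest length of a sublist in which consecutive commands have overlapping domains. -/
noncomputable def cmdDepth {V : Type*} [DecidableEq V] (A : List (Finset V)) : ℕ :=
  sSup {k | ∃ l : List (Finset V),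
    l.Sublist A ∧ l.Chain' (fun a b => (a ∩ b).Nonempty) ∧ l.length = k}

section Aux

variable {V : Type*} [DecidableEq V]

private def depthSet (A : List (Finset V)) : Set ℕ :=
  {k | ∃ l : List (Finset V),
    l.Sublist A ∧ l.Chain' (fun a b => (a ∩ b).Nonempty) ∧ l.length = k}

private lemma depthSet_bdd (A : List (Finset V)) : BddAbove (depthSet A) := by
  refine ⟨A.length, fun k hk => ?_⟩
  obtain ⟨l, hs, _, hl⟩ := hk
  exact hl ▸ hs.length_le

private lemma depthSet_zero (A : List (Finset V)) : 0 ∈ depthSet A :=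
  ⟨[], List.nil_sublist A, List.isChain_nil, rfl⟩

private lemma le_cmdDepth {A : List (Finset V)} {k : ℕ} (hk : k ∈ depthSet A) :
    k ≤ cmdDepth A := le_csSup (depthSet_bdd A) hk

private lemma cmdDepth_le {A : List (Finset V)} {n : ℕ}
    (h : ∀ k ∈ depthSet A, k ≤ n) : cmdDepth A ≤ n :=
  csSup_le ⟨0, depthSet_zero A⟩ h

end Aux

/-- Depth of a tensor composition (concatenation with disjoint qubit sets) is the max of
the depths; depth of a sequential composition (plain concatenation) is at most the sum. -/
theorem depth_tensor_and_seq {V : Type*} [DecidableEq V]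
    (t₁ t₂ : List (Finset V)) (hdisj : ∀ a ∈ t₁, ∀ b ∈ t₂, Disjoint a b) :
    cmdDepth (t₁ ++ t₂) = max (cmdDepth t₁) (cmdDepth t₂) ∧
    ∀ u₁ u₂ : List (Finset V), cmdDepth (u₁ ++ u₂) ≤ cmdDepth u₁ + cmdDepth u₂ := by
  constructor
  · apply le_antisymm
    · apply cmdDepth_le
      rintro k ⟨l, hs, hc, hl⟩
      rw [List.sublist_append_iff] at hs
      obtain ⟨l₁, l₂, rfl, hs₁, hs₂⟩ := hs
      simp only [List.Chain', List.isChain_append] at hc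
      obtain ⟨hc₁, hc₂, hmid⟩ := hc
      -- one of l₁, l₂ must be empty
      rcases l₁.eq_nil_or_concat with rfl | ⟨m, a, rfl⟩
      · exact le_max_of_le_right (le_cmdDepth ⟨l₂, hs₂, hc₂, by simpa using hl⟩)
      rcases l₂ with _ | ⟨b, l₂⟩
      · exact le_max_of_le_left (le_cmdDepth ⟨m.concat a, hs₁, hc₁, by simpa using hl⟩)
      · exfalso
        have ha : a ∈ t₁ := hs₁.mem (by simp)
        have hb : b ∈ t₂ := hs₂.mem (by simp)
        obtain ⟨x, hx⟩ := hmid a (by simp) b (by simp)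
        exact absurd ((hdisj a ha b hb).le_bot hx) (by simp)
    · refine max_le ?_ ?_
      · apply cmdDepth_le
        rintro k ⟨l, hs, hc, hl⟩
        exact le_cmdDepth ⟨l, hs.trans (List.sublist_append_left t₁ t₂), hc, hl⟩
      · apply cmdDepth_le
        rintro k ⟨l, hs, hc, hl⟩
        exact le_cmdDepth ⟨l, hs.trans (List.sublist_append_right t₁ t₂), hc, hl⟩
  · intro u₁ u₂
    apply cmdDepth_le
    rintro k ⟨l, hs, hc, hl⟩
    rw [List.sublist_append_iff] at hs
    obtain ⟨l₁, l₂, rfl, hs₁, hs₂⟩ := hs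
    simp only [List.Chain', List.isChain_append] at hc
    obtain ⟨hc₁, hc₂, -⟩ := hc
    calc k = l₁.length + l₂.length := by simpa using hl.symm
    _ ≤ cmdDepth u₁ + cmdDepth u₂ :=
        add_le_add (le_cmdDepth ⟨l₁, hs₁, hc₁, rfl⟩) (le_cmdDepth ⟨l₂, hs₂, hc₂, rfl⟩)
end
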